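/- Let L_s(u,λ) = L(u,λ) + s L¹(u,λ) + R_s(u,λ) be a family of convex-concave Lagrangians over V × K* with saddle points (u_s, λ_s) of L_s and (u₀, λ₀) of L = L₀. Suppose u_s → u₀ in V, λ_s → λ₀ in H*, L¹ is continuous, and |R_s(u,λ)| = o(s) uniformly on bounded sets. Then (L_s(u_s, λ_s) − L(u₀, λ₀))/s → L¹(u₀, λ₀) as s → 0. -/

import Mathlib

/-- differentiability of the optimal value of a perturbed family
of Lagrangians `L_s = L + s L¹ + R_s` with saddle points `(u_s, lam_s)`
converging to `(u₀, lam₀)`: the difference quotient of the saddle values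
converges to `L¹(u₀, lam₀)`. -/
theorem stmt11
    {V H : Type*} [NormedAddCommGroup V] [InnerProductSpace ℝ V] [CompleteSpace V]
    [NormedAddCommGroup H] [InnerProductSpace ℝ H] [CompleteSpace H]
    (Kstar : Set (H →L[ℝ] ℝ)) (hKc : IsClosed Kstar) (hKconv : Convex ℝ Kstar)
    (hKcone : ∀ l ∈ Kstar, ∀ t : ℝ, 0 ≤ t → t • l ∈ Kstar)
    (L L1 : V × (H →L[ℝ] ℝ) → ℝ) (R : ℝ → V × (H →L[ℝ] ℝ) → ℝ)
    (Ls : ℝ → V × (H →L[ℝ] ℝ) → ℝ)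
    (hLs : ∀ s x, Ls s x = L x + s * L1 x + R s x)
    (us : ℝ → V) (lams : ℝ → (H →L[ℝ] ℝ)) (hlams : ∀ s, lams s ∈ Kstar)
    (hsaddle_s : ∀ s, ∀ w : V, ∀ p ∈ Kstar,
      Ls s (us s, p) ≤ Ls s (us s, lams s) ∧ Ls s (us s, lams s) ≤ Ls s (w, lams s))
    (u₀ : V) (lam₀ : H →L[ℝ] ℝ) (hlam₀ : lam₀ ∈ Kstar)
    (hsaddle₀ : ∀ w : V, ∀ p ∈ Kstar,
      L (u₀, p) ≤ L (u₀, lam₀) ∧ L (u₀, lam₀) ≤ L (w, lam₀))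
    (hconv_u : Filter.Tendsto us (nhdsWithin 0 {0}ᶜ) (nhds u₀))
    (hconv_lam : Filter.Tendsto lams (nhdsWithin 0 {0}ᶜ) (nhds lam₀))
    (hL1cont : Continuous L1)
    (hR : ∀ M : ℝ, 0 < M → ∀ ε : ℝ, 0 < ε → ∃ δ : ℝ, 0 < δ ∧
      ∀ s : ℝ, |s| < δ → ∀ x : V × (H →L[ℝ] ℝ),
        ‖x.1‖ ≤ M → ‖x.2‖ ≤ M → |R s x| ≤ ε * |s|) :
    Filter.Tendsto (fun s => (Ls s (us s, lams s) - L (u₀, lam₀)) / s)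
      (nhdsWithin 0 {0}ᶜ) (nhds (L1 (u₀, lam₀))) := by
  set l := nhdsWithin (0:ℝ) {0}ᶜ with hl
  set ℓ := L1 (u₀, lam₀) with hℓ
  -- bounds on the iterates
  set M : ℝ := ‖u₀‖ + ‖lam₀‖ + 1 with hM
  have hMpos : 0 < M := by positivity
  have hbu : ∀ᶠ s in l, ‖us s‖ ≤ M := by
    filter_upwards [Metric.tendsto_nhds.mp hconv_u 1 one_pos] with s hs
    have := norm_le_norm_add_norm_sub' (us s) u₀
    rw [dist_eq_norm] at hs
    have h2 : ‖u₀ - us s‖ = ‖us s - u₀‖ := by rw [norm_sub_rev]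
    have : ‖us s‖ ≤ ‖u₀‖ + ‖us s - u₀‖ := by
      calc ‖us s‖ = ‖u₀ + (us s - u₀)‖ := by congr 1; abel
        _ ≤ ‖u₀‖ + ‖us s - u₀‖ := norm_add_le _ _
    nlinarith [norm_nonneg lam₀]
  have hblam : ∀ᶠ s in l, ‖lams s‖ ≤ M := by
    filter_upwards [Metric.tendsto_nhds.mp hconv_lam 1 one_pos] with s hs
    rw [dist_eq_norm] at hs
    have : ‖lams s‖ ≤ ‖lam₀‖ + ‖lams s - lam₀‖ := by
      calc ‖lams s‖ = ‖lam₀ + (lams s - lam₀)‖ := by congr 1; abel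
        _ ≤ ‖lam₀‖ + ‖lams s - lam₀‖ := norm_add_le _ _
    nlinarith [norm_nonneg u₀]
  have hbu0 : ‖u₀‖ ≤ M := by nlinarith [norm_nonneg lam₀]
  have hblam0 : ‖lam₀‖ ≤ M := by nlinarith [norm_nonneg u₀]
  -- key: remainder over s tends to zero along bounded families
  have key : ∀ f : ℝ → V × (H →L[ℝ] ℝ),
      (∀ᶠ s in l, ‖(f s).1‖ ≤ M) → (∀ᶠ s in l, ‖(f s).2‖ ≤ M) →
      Filter.Tendsto (fun s => R s (f s) / s) l (nhds 0) := by
    intro f hf1 hf2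
    rw [Metric.tendsto_nhds]
    intro ε hε
    obtain ⟨δ, hδ, hRδ⟩ := hR M hMpos (ε/2) (by positivity)
    have hsmall : ∀ᶠ s in l, |s| < δ := by
      have : ∀ᶠ s in nhds (0:ℝ), |s| < δ := by
        have := Metric.ball_mem_nhds (0:ℝ) hδ
        filter_upwards [this] with s hs
        simpa [Real.dist_eq] using hs
      exact nhdsWithin_le_nhds this
    filter_upwards [hf1, hf2, hsmall, self_mem_nhdsWithin] with s h1 h2 h3 h4
    have hs0 : s ≠ 0 := h4
    have hRb := hRδ s h3 (f s) h1 h2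
    have habs : |s| > 0 := abs_pos.mpr hs0
    rw [Real.dist_eq, sub_zero, abs_div]
    rw [div_lt_iff₀ habs]
    calc |R s (f s)| ≤ ε/2 * |s| := hRb
      _ < ε * |s| := by nlinarith
  -- the two comparison functions
  set A : ℝ → ℝ := fun s => L1 (us s, lam₀) + R s (us s, lam₀) / s with hA
  set B : ℝ → ℝ := fun s => L1 (u₀, lams s) + R s (u₀, lams s) / s with hB
  have hAtend : Filter.Tendsto A l (nhds ℓ) := by
    have h1 : Filter.Tendsto (fun s => L1 (us s, lam₀)) l (nhds ℓ) :=
      (hL1cont.tendsto (u₀, lam₀)).comp (hconv_u.prodMk_nhds tendsto_const_nhds)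
    have h2 := key (fun s => (us s, lam₀)) hbu (Filter.Eventually.of_forall fun s => hblam0)
    simpa using h1.add h2
  have hBtend : Filter.Tendsto B l (nhds ℓ) := by
    have h1 : Filter.Tendsto (fun s => L1 (u₀, lams s)) l (nhds ℓ) :=
      (hL1cont.tendsto (u₀, lam₀)).comp (tendsto_const_nhds.prodMk_nhds hconv_lam)
    have h2 := key (fun s => (u₀, lams s)) (Filter.Eventually.of_forall fun s => hbu0) hblam
    simpa using h1.add h2
  -- sandwich
  set q : ℝ → ℝ := fun s => (Ls s (us s, lams s) - L (u₀, lam₀)) / s with hq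
  have hband : ∀ᶠ s in l, min (A s) (B s) ≤ q s ∧ q s ≤ max (A s) (B s) := by
    filter_upwards [self_mem_nhdsWithin] with s hs
    have hs0 : s ≠ 0 := hs
    set D : ℝ := Ls s (us s, lams s) - L (u₀, lam₀) with hD
    obtain ⟨h1, h2⟩ := hsaddle_s s u₀ lam₀ hlam₀
    obtain ⟨h3, h4⟩ := hsaddle₀ (us s) (lams s) (hlams s)
    have hlow : s * A s ≤ D := by
      have e1 := hLs s (us s, lam₀)
      have e2 : s * A s = s * L1 (us s, lam₀) + R s (us s, lam₀) := by
        simp only [hA]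
        field_simp
      rw [e2]
      -- Ls s (us s, lam₀) ≤ Ls s (us s, lams s) and L(u₀,lam₀) ≤ L(us s,lam₀)
      have := h1
      rw [e1] at this
      linarith
    have hhigh : D ≤ s * B s := by
      have e1 := hLs s (u₀, lams s)
      have e2 : s * B s = s * L1 (u₀, lams s) + R s (u₀, lams s) := by
        simp only [hB]
        field_simp
      rw [e2]
      have := h2
      rw [e1] at this
      linarith
    rcases hs0.lt_or_gt with hneg | hpos
    · constructor
      · refine le_trans (min_le_right _ _) ?_
        rw [le_div_iff_of_neg hneg]
        linarith [hhigh]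
      · refine le_trans ?_ (le_max_left _ _)
        rw [div_le_iff_of_neg hneg]
        linarith [hlow]
    · constructor
      · refine le_trans (min_le_left _ _) ?_
        rw [le_div_iff₀ hpos]
        linarith [hlow]
      · refine le_trans ?_ (le_max_right _ _)
        rw [div_le_iff₀ hpos]
        linarith [hhigh]
  have hmin : Filter.Tendsto (fun s => min (A s) (B s)) l (nhds ℓ) := by
    simpa using hAtend.min hBtend
  have hmax : Filter.Tendsto (fun s => max (A s) (B s)) l (nhds ℓ) := by
    simpa using hAtend.max hBtend
  exact tendsto_of_tendsto_of_tendsto_of_le_of_le' hmin hmax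
    (hband.mono fun s h => h.1) (hband.mono fun s h => h.2)
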